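/- Let [σ₁|τ₁] ∈ B_p and [σ₂|τ₂] ∈ B_q (p,q ≥ 1). If a basis element [σ₃|τ₃] has nonzero coefficient in the product [σ₁|τ₁] ⋆ [σ₂|τ₂] ∈ F_{p+q}, then σ₃ ⊆ σ₁ ∪ σ₂ and τ₃ ⊆ τ₁ ∪ τ₂. -/

import Mathlib

open Classical MvPolynomial Finsupp TensorProduct

set_option maxHeartbeats 1600000

noncomputable section

namespace EdgeRes

/-- A "cell" `(σ, τ)`: a pair of finite sets of vertices, representing the symbol `[σ|τ]`. -/
abbrev Cell (n : ℕ) := Finset (Fin n) × Finset (Fin n)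

/-- The cointerval graph of the intervals `[a i, b i]`: distinct vertices are adjacent
iff the corresponding closed intervals are disjoint. -/
def cigraph (n : ℕ) (a b : Fin n → ℝ) : SimpleGraph (Fin n) where
  Adj i j := i ≠ j ∧ Disjoint (Set.Icc (a i) (b i)) (Set.Icc (a j) (b j))
  symm := ⟨fun i j h => ⟨h.1.symm, h.2.symm⟩⟩
  loopless := ⟨fun i h => h.1 rfl⟩

variable {n : ℕ}

/-- The homological degree of a cell: `|σ| + |τ| - 1`. -/
def cellDeg (e : Cell n) : ℕ := e.1.card + e.2.card - 1

/-- `e = (σ, τ)` is a basis cell: either the degree-0 cell `(∅, ∅)` (representing `1 ∈ B₀`),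
or `σ, τ` are disjoint and nonempty, `max σ < min τ`, and every `i ∈ σ` is adjacent
to `min τ` in `G`. -/
def IsBasisCell (G : SimpleGraph (Fin n)) (e : Cell n) : Prop :=
  e = (∅, ∅) ∨
  (e.1.Nonempty ∧ e.2.Nonempty ∧ Disjoint e.1 e.2 ∧
   (∀ i ∈ e.1, ∀ j ∈ e.2, i < j) ∧
   (∀ i ∈ e.1, ∀ j ∈ e.2, (∀ j' ∈ e.2, j ≤ j') → G.Adj i j))

/-- `e ∈ B_d`. -/
def InB (G : SimpleGraph (Fin n)) (d : ℕ) (e : Cell n) : Prop :=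
  IsBasisCell G e ∧ cellDeg e = d

/-- The underlying module of the resolution: the free `S`-module on all cells (the
resolution `F` is the submodule family spanned by the basis cells of each degree). -/
abbrev Ftot (n : ℕ) (k : Type) [Field k] := Cell n →₀ MvPolynomial (Fin n) k

variable (G : SimpleGraph (Fin n)) (k : Type) [Field k]

/-- The basis vector corresponding to a cell, where symbols that are not genuine
basis elements are interpreted as `0`. -/
def sym (e : Cell n) : Ftot n k :=
  if IsBasisCell G e then Finsupp.single e 1 else 0

/-- The differential on a basis cell: `d[{i}|{j}] = x_i x_j`, and for `|σ|+|τ| ≥ 3`,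
`d[σ|τ] = Σ_{i∈σ} (−1)^{|τ|+|{j∈σ : j>i}|} x_i [σ∖i|τ] + Σ_{i∈τ} (−1)^{|{j∈τ : j>i}|} x_i [σ|τ∖i]`. -/
def diffCell (e : Cell n) : Ftot n k :=
  if IsBasisCell G e then
    if e.1.card + e.2.card = 2 then
      (∏ i ∈ e.1 ∪ e.2, (X i : MvPolynomial (Fin n) k)) • sym G k ((∅, ∅) : Cell n)
    else if 3 ≤ e.1.card + e.2.card then
      (∑ i ∈ e.1,
        (((-1 : MvPolynomial (Fin n) k) ^ (e.2.card + (e.1.filter fun j => i < j).card)) * X i) •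
          sym G k (e.1.erase i, e.2))
      + (∑ i ∈ e.2,
        (((-1 : MvPolynomial (Fin n) k) ^ ((e.2.filter fun j => i < j).card)) * X i) •
          sym G k (e.1, e.2.erase i))
    else 0
  else 0

/-- The differential, as an `S`-linear endomorphism of the total module (it is zero in
degree `0` and on non-basis cells). -/
def Dmap : Ftot n k →ₗ[MvPolynomial (Fin n) k] Ftot n k :=
  Finsupp.lsum ℕ fun e => LinearMap.smulRight LinearMap.id (diffCell G k e)

/-- The submodule `F_d`: the span of the basis cells in `B_d`.  (`F` is the direct sum of
these, and `F_0 = S·[∅|∅] ≅ S`.) -/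
def Fsub (d : ℕ) : Submodule (MvPolynomial (Fin n) k) (Ftot n k) :=
  Submodule.span _ {f : Ftot n k | ∃ e : Cell n, InB G d e ∧ f = Finsupp.single e 1}

/-- The edge ideal `I_G`, generated by the `x_i x_j` for edges `ij` of `G`. -/
def edgeIdeal : Ideal (MvPolynomial (Fin n) k) :=
  Ideal.span {m | ∃ i j : Fin n, G.Adj i j ∧ m = X i * X j}

/-- The irrelevant maximal ideal `(x_1, …, x_n)`. -/
def irrIdeal (n : ℕ) (k : Type) [Field k] : Ideal (MvPolynomial (Fin n) k) :=
  Ideal.span (Set.range fun i : Fin n => (X i : MvPolynomial (Fin n) k))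

/-- The set of pairs `(i, j)` with `i < j`, `ij ∈ E(G)`, and `x_i x_j ∣ x^α`; i.e. the
elements `[{i}|{j}]` of `B₁` whose monomial divides `x^α`. -/
def DvdSet (α : Fin n →₀ ℕ) : Finset (Fin n × Fin n) :=
  Finset.univ.filter fun p => p.1 < p.2 ∧ G.Adj p.1 p.2 ∧ 1 ≤ α p.1 ∧ 1 ≤ α p.2

/-- `c` on a monomial `x^α ∈ F_0 = S`: zero if `x^α ∉ I_G`; otherwise
`(x^α/(x_i x_j))·[{i}|{j}]` for the `≺`-minimal `[{i}|{j}] ∈ B₁` with `x_i x_j ∣ x^α`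
(i.e. `j` is largest possible and then `i` smallest possible). -/
def cZero (α : Fin n →₀ ℕ) : Ftot n k :=
  if h : (DvdSet G α).Nonempty then
    let t := ((DvdSet G α).image Prod.snd).max' (h.image _)
    if h2 : ((((DvdSet G α).filter fun p => p.2 = t)).image Prod.fst).Nonempty then
      let s := ((((DvdSet G α).filter fun p => p.2 = t)).image Prod.fst).min' h2
      (monomial (α - Finsupp.single s 1 - Finsupp.single t 1) (1 : k)) • sym G k ({s}, {t})
    else 0
  else 0

/-- `C₁ = {i ∈ supp α : i > max τ}`. -/
def C1set (τ : Finset (Fin n)) (α : Fin n →₀ ℕ) : Finset (Fin n) :=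
  α.support.filter fun i => ∀ j ∈ τ, j < i

/-- `C₂ = {i ∈ supp α : i < min σ, {i, min τ} ∈ E(G)}`. -/
def C2set (σ τ : Finset (Fin n)) (α : Fin n →₀ ℕ) : Finset (Fin n) :=
  α.support.filter fun i =>
    (∀ s ∈ σ, i < s) ∧ ∀ j ∈ τ, (∀ j' ∈ τ, j ≤ j') → G.Adj i j

/-- `C₃ = {i ∈ supp α : i < min σ, i < max supp α, {i, max supp α} ∈ E(G)}`. -/
def C3set (σ : Finset (Fin n)) (α : Fin n →₀ ℕ) : Finset (Fin n) :=
  α.support.filter fun i =>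
    (∀ s ∈ σ, i < s) ∧ ∀ m ∈ α.support, (∀ m' ∈ α.support, m' ≤ m) → (i < m ∧ G.Adj i m)

/-- The value of the contracting homotopy `c` on the `k`-basis vector `x^α·e`. -/
def cMono (e : Cell n) (α : Fin n →₀ ℕ) : Ftot n k :=
  if IsBasisCell G e then
    if hτ : e.2.Nonempty then
      if e.2.card = 1 then
        -- `τ = {t}`
        let t := e.2.max' hτ
        if h1 : (C1set e.2 α).Nonempty then
          let m1 := (C1set e.2 α).max' h1
          (monomial (α - Finsupp.single m1 1) (1 : k)) • sym G k (e.1, insert m1 e.2)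
          + (if h3 : (C3set G e.1 α).Nonempty then
              let m3 := (C3set G e.1 α).min' h3
              ((-1 : MvPolynomial (Fin n) k) ^ (e.1.card + 1)) •
                ((monomial (α + Finsupp.single t 1 - Finsupp.single m1 1 - Finsupp.single m3 1)
                    (1 : k)) • sym G k (insert m3 e.1, ({m1} : Finset (Fin n))))
            else 0)
        else
          if h2 : (C2set G e.1 e.2 α).Nonempty then
            let m2 := (C2set G e.1 e.2 α).min' h2
            ((-1 : MvPolynomial (Fin n) k) ^ (e.1.card + 1)) •
              ((monomial (α - Finsupp.single m2 1) (1 : k)) • sym G k (insert m2 e.1, e.2))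
          else 0
      else
        -- `|τ| ≥ 2`
        if h1 : (C1set e.2 α).Nonempty then
          let m1 := (C1set e.2 α).max' h1
          (monomial (α - Finsupp.single m1 1) (1 : k)) • sym G k (e.1, insert m1 e.2)
        else 0
    else cZero G k α  -- the degree-0 basis cell `(∅, ∅)`
  else 0

/-- The `k`-basis of the total module, indexed by pairs (cell, monomial exponent). -/
def FBasis (n : ℕ) (k : Type) [Field k] :
    Module.Basis ((_ : Cell n) × (Fin n →₀ ℕ)) k (Ftot n k) :=
  Finsupp.basis fun _ => MvPolynomial.basisMonomials (Fin n) k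

/-- The contracting homotopy `c`, as a `k`-linear endomorphism of the total module. -/
def Cmap : Ftot n k →ₗ[k] Ftot n k :=
  (FBasis n k).constr ℕ fun p => cMono G k p.1 p.2

/-- The `S`-bilinear extension of a map defined on pairs of cells. -/
def biext (b : Cell n → Cell n → Ftot n k) (f g : Ftot n k) : Ftot n k :=
  ∑ e₁ ∈ f.support, ∑ e₂ ∈ g.support, (f e₁ * g e₂) • b e₁ e₂

/-- The product of two basis cells, defined recursively (with fuel, which suffices as each
recursive step lowers the total degree): `1 ⋆ 1 = 1`, and for `p + q ≥ 1`,
`e₁ ⋆ e₂ = c((d e₁) ⋆ e₂) + (−1)^p c(e₁ ⋆ (d e₂))`. -/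
def bstar : ℕ → Cell n → Cell n → Ftot n k
  | 0, _, _ => 0
  | N + 1, e₁, e₂ =>
    if cellDeg e₁ + cellDeg e₂ = 0 then Finsupp.single ((∅, ∅) : Cell n) 1
    else
      Cmap G k (biext k (fun a b => bstar N a b) (Dmap G k (Finsupp.single e₁ 1)) (Finsupp.single e₂ 1))
      + ((-1 : MvPolynomial (Fin n) k) ^ cellDeg e₁) •
          Cmap G k (biext k (fun a b => bstar N a b) (Finsupp.single e₁ 1) (Dmap G k (Finsupp.single e₂ 1)))

/-- The product `⋆` on the resolution, extended `S`-bilinearly from basis cells. -/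
def pstar (f g : Ftot n k) : Ftot n k := biext k (bstar G k (4 * n + 4)) f g

/-- The map `∂` on a basis cell: `∂[{i}|{j}] = x_i x_j`, and for `|σ|+|τ| ≥ 3`,
`∂[σ|τ] = x_{max τ}[σ|τ∖max τ] − (−1)^{|τ|+|σ|} x_{min σ}[σ∖min σ|τ]`. -/
def partialCell (e : Cell n) : Ftot n k :=
  if IsBasisCell G e then
    if e.1.card + e.2.card = 2 then
      (∏ i ∈ e.1 ∪ e.2, (X i : MvPolynomial (Fin n) k)) • sym G k ((∅, ∅) : Cell n)
    else if 3 ≤ e.1.card + e.2.card then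
      if h1 : e.1.Nonempty then
        if h2 : e.2.Nonempty then
          (X (e.2.max' h2) : MvPolynomial (Fin n) k) • sym G k (e.1, e.2.erase (e.2.max' h2))
          - ((-1 : MvPolynomial (Fin n) k) ^ (e.2.card + e.1.card)) •
              ((X (e.1.min' h1) : MvPolynomial (Fin n) k) •
                sym G k (e.1.erase (e.1.min' h1), e.2))
        else 0
      else 0
    else 0
  else 0

/-- The map `∂`, as an `S`-linear endomorphism of the total module. -/
def Pmap : Ftot n k →ₗ[MvPolynomial (Fin n) k] Ftot n k :=
  Finsupp.lsum ℕ fun e => LinearMap.smulRight LinearMap.id (partialCell G k e)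

/-- The `k`-linear projection `π` of `S` fixing each monomial not in `I_G` and
annihilating each monomial in `I_G`. -/
def piMap : MvPolynomial (Fin n) k →ₗ[k] MvPolynomial (Fin n) k :=
  (MvPolynomial.basisMonomials (Fin n) k).constr ℕ fun α =>
    if monomial α (1 : k) ∈ edgeIdeal G k then 0 else monomial α (1 : k)

/-- The `ℕⁿ`-multidegree of the basis vector `x^α [σ|τ]`: `α + Σ_{i ∈ σ∪τ} eᵢ`. -/
def mdeg (e : Cell n) (α : Fin n →₀ ℕ) : Fin n →₀ ℕ :=
  α + ∑ i ∈ e.1 ∪ e.2, Finsupp.single i 1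

/-- The `μ`-homogeneous component of the resolution (as a `k`-subspace). -/
def Hsub (μ : Fin n →₀ ℕ) : Submodule k (Ftot n k) :=
  Submodule.span k {f : Ftot n k |
    ∃ (e : Cell n) (α : Fin n →₀ ℕ), IsBasisCell G e ∧ mdeg e α = μ ∧
      f = Finsupp.single e (monomial α (1 : k))}


/-! ### Auxiliary development for `stmt12` -/

section Aux

variable {n : ℕ}

/-- `A₁ = σ₁ ∪ σ₂`. -/
def A1 (e₁ e₂ : Cell n) : Finset (Fin n) := e₁.1 ∪ e₂.1

/-- `A₂ = τ₁ ∪ τ₂`. -/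
def A2 (e₁ e₂ : Cell n) : Finset (Fin n) := e₁.2 ∪ e₂.2

/-- Characteristic function of a finite set, as a `Finsupp`. -/
def chi (s : Finset (Fin n)) : Fin n →₀ ℕ := ∑ i ∈ s, Finsupp.single i 1

/-- Total multidegree of the pair of cells. -/
def DD (e₁ e₂ : Cell n) : Fin n →₀ ℕ := ((chi e₁.1 + chi e₁.2) + chi e₂.1) + chi e₂.2

lemma chi_apply (s : Finset (Fin n)) (i : Fin n) : chi s i = if i ∈ s then 1 else 0 := by
  classical
  rw [chi, Finsupp.finset_sum_apply]
  rw [Finset.sum_congr rfl (fun j _ => Finsupp.single_apply (a := j) (a' := i) (b := (1:ℕ)))]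
  exact Finset.sum_ite_eq' s i (fun _ => 1)

lemma chi_ne_zero {s : Finset (Fin n)} {i : Fin n} : chi s i ≠ 0 ↔ i ∈ s := by
  rw [chi_apply]; split <;> simp_all

/-- The key inductive invariant, non-degenerate case: the cell `e = (σ,τ)` with monomial
exponent `α` appearing in the product associated to the pair `(e₁,e₂)`. -/
def NOK (G : SimpleGraph (Fin n)) (e₁ e₂ e : Cell n) (α : Fin n →₀ ℕ) : Prop :=
  e.1.Nonempty ∧ e.2.Nonempty ∧ e.1 ⊆ A1 e₁ e₂ ∧ e.2 ⊆ A2 e₁ e₂ ∧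
  (∀ i, α i ≠ 0 → i ∈ A1 e₁ e₂ ∨ i ∈ A2 e₁ e₂) ∧
  (∀ i, DD e₁ e₂ i ≠ 0 → i ∈ e.1 ∨ i ∈ e.2 ∨ α i ≠ 0) ∧
  (∀ i, α i ≠ 0 → i ∈ A1 e₁ e₂ → i ∉ A2 e₁ e₂ →
     ∃ j, i < j ∧ (j ∈ e.1 ∨ j ∈ e.2 ∨ (α j ≠ 0 ∧ j ∈ A2 e₁ e₂))) ∧
  (∀ i, α i ≠ 0 → i ∈ A2 e₁ e₂ → i ∉ A1 e₁ e₂ →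
     ∃ x, x < i ∧ (x ∈ e.1 ∨ x ∈ e.2 ∨ (α x ≠ 0 ∧ x ∈ A1 e₁ e₂ ∧ G.Adj x i)))

/-- Invariant for terms of `bstar` for the pair `(e₁,e₂)`. -/
def TermOK (G : SimpleGraph (Fin n)) (e₁ e₂ e : Cell n) (α : Fin n →₀ ℕ) : Prop :=
  (e.1 = ∅ ∧ e.2 = ∅ ∧ α = 0 ∧ DD e₁ e₂ = 0) ∨ NOK G e₁ e₂ e α

/-- Invariant for terms of the input of the contracting homotopy in the recursion. -/
def InOK (G : SimpleGraph (Fin n)) (e₁ e₂ e : Cell n) (α : Fin n →₀ ℕ) : Prop :=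
  (e.1 = ∅ ∧ e.2 = ∅ ∧ (∃ u v : Fin n, u < v ∧ G.Adj u v ∧ u ∈ A1 e₁ e₂ ∧ v ∈ A2 e₁ e₂ ∧
      α = Finsupp.single u 1 + Finsupp.single v 1) ∧ (∀ i, DD e₁ e₂ i ≠ 0 → α i ≠ 0)) ∨
  NOK G e₁ e₂ e α

variable {k : Type} [Field k]

lemma coeff_elem_mul {p q : MvPolynomial (Fin n) k} {γ : Fin n →₀ ℕ}
    (h : MvPolynomial.coeff γ (p * q) ≠ 0) :
    ∃ a b, a + b = γ ∧ MvPolynomial.coeff a p ≠ 0 ∧ MvPolynomial.coeff b q ≠ 0 := by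
  classical
  rw [MvPolynomial.coeff_mul] at h
  obtain ⟨x, hx, hne⟩ := Finset.exists_ne_zero_of_sum_ne_zero h
  exact ⟨x.1, x.2, Finset.HasAntidiagonal.mem_antidiagonal.mp hx, left_ne_zero_of_mul hne,
    right_ne_zero_of_mul hne⟩

lemma coeff_sym {G : SimpleGraph (Fin n)} {e e' : Cell n} {γ : Fin n →₀ ℕ}
    (h : MvPolynomial.coeff γ ((sym G k e) e') ≠ 0) :
    e' = e ∧ γ = 0 ∧ IsBasisCell G e := by
  classical
  rw [sym] at h
  split at h
  · rename_i hb
    rw [Finsupp.single_apply] at h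
    split at h
    · rename_i he
      subst he
      refine ⟨rfl, ?_, hb⟩
      by_contra hγ
      rw [MvPolynomial.coeff_one, if_neg (fun hh => hγ hh.symm)] at h
      exact h rfl
    · simp at h
  · simp at h

lemma coeff_monomial_smul_sym {G : SimpleGraph (Fin n)} {δ : Fin n →₀ ℕ} {e e' : Cell n}
    {γ : Fin n →₀ ℕ}
    (h : MvPolynomial.coeff γ (((MvPolynomial.monomial δ (1:k)) • sym G k e) e') ≠ 0) :
    e' = e ∧ γ = δ ∧ IsBasisCell G e := by
  classical
  rw [Finsupp.smul_apply, smul_eq_mul] at h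
  obtain ⟨a, b, hab, ha, hb⟩ := coeff_elem_mul h
  obtain ⟨he, hb0, hbase⟩ := coeff_sym hb
  rw [MvPolynomial.coeff_monomial] at ha
  have : δ = a := by by_contra hh; rw [if_neg hh] at ha; exact ha rfl
  subst this hb0
  exact ⟨he, by rw [← hab, add_zero], hbase⟩

lemma coeff_ksmul {c : k} {f : Ftot n k} {e' : Cell n} {γ : Fin n →₀ ℕ}
    (h : MvPolynomial.coeff γ ((c • f) e') ≠ 0) : MvPolynomial.coeff γ (f e') ≠ 0 := by
  rw [Finsupp.smul_apply, MvPolynomial.coeff_smul] at h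
  exact fun hh => h (by rw [hh, smul_zero])

lemma coeff_negpow_smul {m : ℕ} {f : Ftot n k} {e' : Cell n} {γ : Fin n →₀ ℕ}
    (h : MvPolynomial.coeff γ ((((-1 : MvPolynomial (Fin n) k) ^ m) • f) e') ≠ 0) :
    MvPolynomial.coeff γ (f e') ≠ 0 := by
  rw [Finsupp.smul_apply, smul_eq_mul] at h
  intro hh
  apply h
  have : ((-1 : MvPolynomial (Fin n) k) ^ m) = MvPolynomial.C ((-1 : k) ^ m) := by
    rw [map_pow, map_neg, map_one]
  rw [this, MvPolynomial.coeff_C_mul, hh, mul_zero]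

lemma adj_upward {a b : Fin n → ℝ} (hab : ∀ i, a i ≤ b i)
    (hmono : ∀ i j : Fin n, i < j → a i ≤ a j) :
    ∀ x i j : Fin n, x < i → i ≤ j → (cigraph n a b).Adj x i → (cigraph n a b).Adj x j := by
  intro x i j hxi hij hadj
  obtain ⟨hne, hdisj⟩ := hadj
  have haij : a i ≤ a j := hij.lt_or_eq.elim (fun h => hmono i j h) (fun h => h ▸ le_refl _)
  have hbx : b x < a i := by
    by_contra hge
    push_neg at hge
    exact Set.disjoint_left.mp hdisj (Set.mem_Icc.mpr ⟨hmono x i hxi, hge⟩)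
      (Set.mem_Icc.mpr ⟨le_refl _, hab i⟩)
  refine ⟨Fin.ne_of_lt (lt_of_lt_of_le hxi hij), Set.disjoint_left.mpr ?_⟩
  intro t ht ht2
  have h1 : t ≤ b x := (Set.mem_Icc.mp ht).2
  have h2 : a j ≤ t := (Set.mem_Icc.mp ht2).1
  linarith

lemma basis_nondeg {G : SimpleGraph (Fin n)} {e : Cell n} (hb : IsBasisCell G e)
    (hne : e.2.Nonempty) :
    e.1.Nonempty ∧ e.2.Nonempty ∧ Disjoint e.1 e.2 ∧ (∀ i ∈ e.1, ∀ j ∈ e.2, i < j) ∧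
    (∀ i ∈ e.1, ∀ j ∈ e.2, (∀ j' ∈ e.2, j ≤ j') → G.Adj i j) := by
  rcases hb with h | h
  · exfalso
    have : e.2 = ∅ := congrArg Prod.snd h
    rw [this] at hne
    exact Finset.not_nonempty_empty hne
  · exact h

lemma basis_card_nondeg {G : SimpleGraph (Fin n)} {e : Cell n} (hb : IsBasisCell G e)
    (hc : 2 ≤ e.1.card + e.2.card) : e.2.Nonempty := by
  rcases hb with h | h
  · exfalso
    have h1 : e.1 = ∅ := congrArg Prod.fst h
    have h2 : e.2 = ∅ := congrArg Prod.snd h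
    rw [h1, h2] at hc
    simp at hc
  · exact h.2.1

lemma cellDeg_zero_eq {G : SimpleGraph (Fin n)} {e : Cell n} (hb : IsBasisCell G e)
    (h : cellDeg e = 0) : e = ((∅, ∅) : Cell n) := by
  rcases hb with h' | h'
  · exact h'
  · exfalso
    obtain ⟨hs, ht, -, -, -⟩ := h'
    rw [cellDeg] at h
    have h1 : 1 ≤ e.1.card := Finset.card_pos.mpr hs
    have h2 : 1 ≤ e.2.card := Finset.card_pos.mpr ht
    omega

lemma chi_empty : chi (∅ : Finset (Fin n)) = 0 := Finset.sum_empty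

lemma chi_erase {s : Finset (Fin n)} {i : Fin n} (hi : i ∈ s) :
    chi s = chi (s.erase i) + Finsupp.single i 1 := by
  rw [chi, chi, ← Finset.add_sum_erase _ _ hi, add_comm]

lemma A1_comm (e₁ e₂ : Cell n) : A1 e₁ e₂ = A1 e₂ e₁ := Finset.union_comm _ _

lemma A2_comm (e₁ e₂ : Cell n) : A2 e₁ e₂ = A2 e₂ e₁ := Finset.union_comm _ _

lemma DD_comm (e₁ e₂ : Cell n) : DD e₁ e₂ = DD e₂ e₁ := by rw [DD, DD]; abel

lemma NOK_comm {G : SimpleGraph (Fin n)} {e₁ e₂ e : Cell n} {α : Fin n →₀ ℕ}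
    (h : NOK G e₁ e₂ e α) : NOK G e₂ e₁ e α := by
  rw [NOK, A1_comm, A2_comm, DD_comm] at h
  exact h

lemma TermOK_comm {G : SimpleGraph (Fin n)} {e₁ e₂ e : Cell n} {α : Fin n →₀ ℕ}
    (h : TermOK G e₁ e₂ e α) : TermOK G e₂ e₁ e α := by
  rcases h with ⟨h1, h2, h3, h4⟩ | hn
  · exact Or.inl ⟨h1, h2, h3, by rw [DD_comm]; exact h4⟩
  · exact Or.inr (NOK_comm hn)

lemma InOK_comm {G : SimpleGraph (Fin n)} {e₁ e₂ e : Cell n} {α : Fin n →₀ ℕ}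
    (h : InOK G e₁ e₂ e α) : InOK G e₂ e₁ e α := by
  rcases h with ⟨h1, h2, ⟨u, v, hu⟩, h4⟩ | hn
  · refine Or.inl ⟨h1, h2, ⟨u, v, ?_⟩, ?_⟩
    · rw [A1_comm e₂ e₁, A2_comm e₂ e₁]; exact hu
    · rw [DD_comm e₂ e₁]; exact h4
  · exact Or.inr (NOK_comm hn)

lemma mem_C1set {τ : Finset (Fin n)} {α : Fin n →₀ ℕ} {i : Fin n} :
    i ∈ C1set τ α ↔ α i ≠ 0 ∧ ∀ j ∈ τ, j < i := by
  rw [C1set, Finset.mem_filter, Finsupp.mem_support_iff]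

lemma mem_C2set {G : SimpleGraph (Fin n)} {σ τ : Finset (Fin n)} {α : Fin n →₀ ℕ} {i : Fin n} :
    i ∈ C2set G σ τ α ↔ α i ≠ 0 ∧ (∀ s ∈ σ, i < s) ∧
      ∀ j ∈ τ, (∀ j' ∈ τ, j ≤ j') → G.Adj i j := by
  rw [C2set, Finset.mem_filter, Finsupp.mem_support_iff]

lemma mem_C3set {G : SimpleGraph (Fin n)} {σ : Finset (Fin n)} {α : Fin n →₀ ℕ} {i : Fin n} :
    i ∈ C3set G σ α ↔ α i ≠ 0 ∧ (∀ s ∈ σ, i < s) ∧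
      ∀ m ∈ α.support, (∀ m' ∈ α.support, m' ≤ m) → (i < m ∧ G.Adj i m) := by
  rw [C3set, Finset.mem_filter, Finsupp.mem_support_iff]

lemma m1_mem_A2 {G : SimpleGraph (Fin n)} {e₁ e₂ e : Cell n} {α : Fin n →₀ ℕ}
    (horder : ∀ i ∈ e.1, ∀ j ∈ e.2, i < j)
    (hn : NOK G e₁ e₂ e α) (h1 : (C1set e.2 α).Nonempty) :
    (C1set e.2 α).max' h1 ∈ A2 e₁ e₂ := by
  obtain ⟨-, hτ, -, -, hS, -, hP1, -⟩ := hn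
  have hm1 := Finset.max'_mem _ h1
  rw [mem_C1set] at hm1
  obtain ⟨hα1, hgt⟩ := hm1
  by_contra hA2
  have hA1 : (C1set e.2 α).max' h1 ∈ A1 e₁ e₂ := (hS _ hα1).resolve_right hA2
  obtain ⟨j, hij, hj⟩ := hP1 _ hα1 hA1 hA2
  rcases hj with hj | hj | ⟨hαj, hjA2⟩
  · obtain ⟨x, hx⟩ := hτ
    exact lt_irrefl _ (lt_trans (lt_trans hij (horder j hj x hx)) (hgt x hx))
  · exact lt_asymm hij (hgt j hj)
  · have : j ∈ C1set e.2 α := mem_C1set.mpr ⟨hαj, fun x hx => lt_trans (hgt x hx) hij⟩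
    exact absurd hij (not_lt.mpr (Finset.le_max' _ j this))

lemma m2_mem_A1 {G : SimpleGraph (Fin n)}
    (hG : ∀ x i j : Fin n, x < i → i ≤ j → G.Adj x i → G.Adj x j)
    {e₁ e₂ e : Cell n} {α : Fin n →₀ ℕ}
    (horder : ∀ i ∈ e.1, ∀ j ∈ e.2, i < j)
    (hn : NOK G e₁ e₂ e α) (h2 : (C2set G e.1 e.2 α).Nonempty) :
    (C2set G e.1 e.2 α).min' h2 ∈ A1 e₁ e₂ := by
  obtain ⟨hσ, -, -, -, hS, -, -, hQ⟩ := hn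
  have hm2 := Finset.min'_mem _ h2
  rw [mem_C2set] at hm2
  obtain ⟨hα2, hlt, hadj2⟩ := hm2
  by_contra hA1
  have hA2 : (C2set G e.1 e.2 α).min' h2 ∈ A2 e₁ e₂ := (hS _ hα2).resolve_left hA1
  obtain ⟨x, hxlt, hx⟩ := hQ _ hα2 hA2 hA1
  rcases hx with hx | hx | ⟨hαx, hxA1, hadjx⟩
  · exact lt_asymm hxlt (hlt x hx)
  · obtain ⟨s0, hs0⟩ := hσ
    exact lt_asymm hxlt (lt_trans (hlt s0 hs0) (horder s0 hs0 x hx))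
  · have hxC2 : x ∈ C2set G e.1 e.2 α := by
      rw [mem_C2set]
      refine ⟨hαx, fun s hs => lt_trans hxlt (hlt s hs), fun j hj hjmin => ?_⟩
      obtain ⟨s0, hs0⟩ := hσ
      exact hG x _ j hxlt (le_of_lt (lt_trans (hlt s0 hs0) (horder s0 hs0 j hj))) hadjx
    exact absurd hxlt (not_lt.mpr (Finset.min'_le _ x hxC2))

lemma m3_mem_A1 {G : SimpleGraph (Fin n)}
    (hG : ∀ x i j : Fin n, x < i → i ≤ j → G.Adj x i → G.Adj x j)
    {e₁ e₂ e : Cell n} {α : Fin n →₀ ℕ}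
    (horder : ∀ i ∈ e.1, ∀ j ∈ e.2, i < j)
    (hn : NOK G e₁ e₂ e α) (h3 : (C3set G e.1 α).Nonempty) :
    (C3set G e.1 α).min' h3 ∈ A1 e₁ e₂ := by
  obtain ⟨hσ, -, -, -, hS, -, -, hQ⟩ := hn
  have hm3 := Finset.min'_mem _ h3
  rw [mem_C3set] at hm3
  obtain ⟨hα3, hlt, hmax⟩ := hm3
  by_contra hA1
  have hA2 : (C3set G e.1 α).min' h3 ∈ A2 e₁ e₂ := (hS _ hα3).resolve_left hA1
  obtain ⟨x, hxlt, hx⟩ := hQ _ hα3 hA2 hA1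
  rcases hx with hx | hx | ⟨hαx, hxA1, hadjx⟩
  · exact lt_asymm hxlt (hlt x hx)
  · obtain ⟨s0, hs0⟩ := hσ
    exact lt_asymm hxlt (lt_trans (hlt s0 hs0) (horder s0 hs0 x hx))
  · have hxC3 : x ∈ C3set G e.1 α := by
      rw [mem_C3set]
      refine ⟨hαx, fun s hs => lt_trans hxlt (hlt s hs), fun m hm hmm => ?_⟩
      exact ⟨lt_trans hxlt (hmax m hm hmm).1,
        hG x _ m hxlt (le_of_lt (hmax m hm hmm).1) hadjx⟩
    exact absurd hxlt (not_lt.mpr (Finset.min'_le _ x hxC3))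

lemma DvdSet_pair {G : SimpleGraph (Fin n)} {u v : Fin n} (huv : u < v) (hadj : G.Adj u v) :
    DvdSet G (Finsupp.single u 1 + Finsupp.single v 1) = {(u, v)} := by
  ext p
  rw [DvdSet, Finset.mem_filter, Finset.mem_singleton]
  constructor
  · rintro ⟨-, hlt, hadj', h1, h2⟩
    have key : ∀ x : Fin n, 1 ≤ (Finsupp.single u 1 + Finsupp.single v 1 : Fin n →₀ ℕ) x → x = u ∨ x = v := by
      intro x hx
      by_contra hc
      push_neg at hc
      rw [Finsupp.add_apply, Finsupp.single_apply, Finsupp.single_apply,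
        if_neg (fun h => hc.1 h.symm), if_neg (fun h => hc.2 h.symm)] at hx
      omega
    rcases key p.1 h1 with h | h <;> rcases key p.2 h2 with h' | h'
    · exact absurd hlt (by rw [h, h']; exact lt_irrefl _)
    · exact Prod.ext h h'
    · exfalso
      have hvu : v < u := by rw [← h, ← h']; exact hlt
      exact lt_asymm hvu huv
    · exact absurd hlt (by rw [h, h']; exact lt_irrefl _)
  · rintro rfl
    refine ⟨Finset.mem_univ _, huv, hadj, ?_, ?_⟩
    · rw [Finsupp.add_apply, Finsupp.single_apply, Finsupp.single_apply]
      simp [huv.ne']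
    · rw [Finsupp.add_apply, Finsupp.single_apply, Finsupp.single_apply]
      simp [huv.ne]

lemma lemA_T1 {G : SimpleGraph (Fin n)} {e₁ e₂ e : Cell n} {α : Fin n →₀ ℕ}
    (horder : ∀ i ∈ e.1, ∀ j ∈ e.2, i < j)
    (hn : NOK G e₁ e₂ e α) (h1 : (C1set e.2 α).Nonempty) :
    NOK G e₁ e₂ (e.1, insert ((C1set e.2 α).max' h1) e.2)
      (α - Finsupp.single ((C1set e.2 α).max' h1) 1) := by
  have hm1A2 := m1_mem_A2 horder hn h1
  set m1 := (C1set e.2 α).max' h1 with hm1def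
  obtain ⟨hσ, hτ, hsA, htA, hS, hR, hP1, hQ⟩ := hn
  have hγ : ∀ j, j ≠ m1 → (α - Finsupp.single m1 1 : Fin n →₀ ℕ) j = α j := by
    intro j hj
    rw [Finsupp.tsub_apply, Finsupp.single_apply, if_neg (fun h => hj h.symm), Nat.sub_zero]
  have hγ0 : ∀ j, (α - Finsupp.single m1 1 : Fin n →₀ ℕ) j ≠ 0 → α j ≠ 0 := by
    intro j hj hc
    exact hj (by rw [Finsupp.tsub_apply, hc, Nat.zero_sub])
  refine ⟨hσ, Finset.insert_nonempty _ _, hsA, Finset.insert_subset hm1A2 htA, ?_, ?_, ?_, ?_⟩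
  · intro i hi; exact hS i (hγ0 i hi)
  · intro i hDD
    rcases hR i hDD with h | h | h
    · exact Or.inl h
    · exact Or.inr (Or.inl (Finset.mem_insert_of_mem h))
    · by_cases him : i = m1
      · exact Or.inr (Or.inl (him ▸ Finset.mem_insert_self _ _))
      · exact Or.inr (Or.inr (by rw [hγ i him]; exact h))
  · intro i hγi hiA1 hiA2
    obtain ⟨j, hij, hj⟩ := hP1 i (hγ0 i hγi) hiA1 hiA2
    refine ⟨j, hij, ?_⟩
    rcases hj with hj | hj | ⟨hαj, hjA2⟩
    · exact Or.inl hj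
    · exact Or.inr (Or.inl (Finset.mem_insert_of_mem hj))
    · by_cases hjm : j = m1
      · exact Or.inr (Or.inl (hjm ▸ Finset.mem_insert_self _ _))
      · exact Or.inr (Or.inr ⟨by rw [hγ j hjm]; exact hαj, hjA2⟩)
  · intro i hγi hiA2 hiA1
    obtain ⟨x, hxi, hx⟩ := hQ i (hγ0 i hγi) hiA2 hiA1
    refine ⟨x, hxi, ?_⟩
    rcases hx with hx | hx | ⟨hαx, hxA1, hadjx⟩
    · exact Or.inl hx
    · exact Or.inr (Or.inl (Finset.mem_insert_of_mem hx))
    · by_cases hxm : x = m1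
      · exact Or.inr (Or.inl (hxm ▸ Finset.mem_insert_self _ _))
      · exact Or.inr (Or.inr ⟨by rw [hγ x hxm]; exact hαx, hxA1, hadjx⟩)

lemma cZero_coeff {G : SimpleGraph (Fin n)} {α : Fin n →₀ ℕ} {e' : Cell n} {γ : Fin n →₀ ℕ}
    (h : MvPolynomial.coeff γ ((cZero G k α) e') ≠ 0) :
    ∃ s t : Fin n, s < t ∧ G.Adj s t ∧ α s ≠ 0 ∧ α t ≠ 0 ∧
      e' = (({s}, {t}) : Cell n) ∧ γ = α - Finsupp.single s 1 - Finsupp.single t 1 ∧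
      IsBasisCell G (({s}, {t}) : Cell n) := by
  classical
  rw [cZero] at h
  split at h
  · rename_i hne
    simp only [] at h
    split at h
    · rename_i hne2
      set t := ((DvdSet G α).image Prod.snd).max' (hne.image _) with htdef
      set s := ((((DvdSet G α).filter fun p => p.2 = t)).image Prod.fst).min' hne2 with hsdef
      obtain ⟨he', hγ, hbase⟩ := coeff_monomial_smul_sym h
      have hs := Finset.min'_mem _ hne2
      rw [← hsdef] at hs
      obtain ⟨p, hp, hps⟩ := Finset.mem_image.mp hs
      obtain ⟨hpD, hpt⟩ := Finset.mem_filter.mp hp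
      have hmem : (s, t) ∈ DvdSet G α := by
        have : p = (s, t) := Prod.ext hps hpt
        rw [← this]; exact hpD
      rw [DvdSet, Finset.mem_filter] at hmem
      obtain ⟨-, hlt, hadj, h1, h2⟩ := hmem
      exact ⟨s, t, hlt, hadj, Nat.one_le_iff_ne_zero.mp h1, Nat.one_le_iff_ne_zero.mp h2,
        he', hγ, hbase⟩
    · simp at h
  · simp at h

lemma add_ne_zero_cases {M : Type*} [AddZeroClass M] {x y : M} (h : x + y ≠ 0) :
    x ≠ 0 ∨ y ≠ 0 := by
  by_contra hc
  push_neg at hc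
  rw [hc.1, hc.2, add_zero] at h
  exact h rfl

lemma lemA_T3 {G : SimpleGraph (Fin n)}
    (hG : ∀ x i j : Fin n, x < i → i ≤ j → G.Adj x i → G.Adj x j)
    {e₁ e₂ e : Cell n} {α : Fin n →₀ ℕ}
    (horder : ∀ i ∈ e.1, ∀ j ∈ e.2, i < j)
    (hn : NOK G e₁ e₂ e α) (h2 : (C2set G e.1 e.2 α).Nonempty) :
    NOK G e₁ e₂ (insert ((C2set G e.1 e.2 α).min' h2) e.1, e.2)
      (α - Finsupp.single ((C2set G e.1 e.2 α).min' h2) 1) := by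
  have hm2A1 := m2_mem_A1 hG horder hn h2
  set m2 := (C2set G e.1 e.2 α).min' h2 with hm2def
  obtain ⟨hσ, hτ, hsA, htA, hS, hR, hP1, hQ⟩ := hn
  have hγ : ∀ j, j ≠ m2 → (α - Finsupp.single m2 1 : Fin n →₀ ℕ) j = α j := by
    intro j hj
    rw [Finsupp.tsub_apply, Finsupp.single_apply, if_neg (fun h => hj h.symm), Nat.sub_zero]
  have hγ0 : ∀ j, (α - Finsupp.single m2 1 : Fin n →₀ ℕ) j ≠ 0 → α j ≠ 0 := by
    intro j hj hc
    exact hj (by rw [Finsupp.tsub_apply, hc, Nat.zero_sub])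
  refine ⟨Finset.insert_nonempty _ _, hτ, Finset.insert_subset hm2A1 hsA, htA, ?_, ?_, ?_, ?_⟩
  · intro i hi; exact hS i (hγ0 i hi)
  · intro i hDD
    rcases hR i hDD with h | h | h
    · exact Or.inl (Finset.mem_insert_of_mem h)
    · exact Or.inr (Or.inl h)
    · by_cases him : i = m2
      · exact Or.inl (by rw [him]; exact Finset.mem_insert_self _ _)
      · exact Or.inr (Or.inr (by rw [hγ i him]; exact h))
  · intro i hγi hiA1 hiA2
    obtain ⟨j, hij, hj⟩ := hP1 i (hγ0 i hγi) hiA1 hiA2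
    refine ⟨j, hij, ?_⟩
    rcases hj with hj | hj | ⟨hαj, hjA2⟩
    · exact Or.inl (Finset.mem_insert_of_mem hj)
    · exact Or.inr (Or.inl hj)
    · by_cases hjm : j = m2
      · exact Or.inl (by rw [hjm]; exact Finset.mem_insert_self _ _)
      · exact Or.inr (Or.inr ⟨by rw [hγ j hjm]; exact hαj, hjA2⟩)
  · intro i hγi hiA2 hiA1
    obtain ⟨x, hxi, hx⟩ := hQ i (hγ0 i hγi) hiA2 hiA1
    refine ⟨x, hxi, ?_⟩
    rcases hx with hx | hx | ⟨hαx, hxA1, hadjx⟩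
    · exact Or.inl (Finset.mem_insert_of_mem hx)
    · exact Or.inr (Or.inl hx)
    · by_cases hxm : x = m2
      · exact Or.inl (by rw [hxm]; exact Finset.mem_insert_self _ _)
      · exact Or.inr (Or.inr ⟨by rw [hγ x hxm]; exact hαx, hxA1, hadjx⟩)

lemma lemA_T2 {G : SimpleGraph (Fin n)}
    (hG : ∀ x i j : Fin n, x < i → i ≤ j → G.Adj x i → G.Adj x j)
    {e₁ e₂ e : Cell n} {α : Fin n →₀ ℕ} {t0 : Fin n}
    (he2 : e.2 = {t0})
    (horder : ∀ i ∈ e.1, ∀ j ∈ e.2, i < j)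
    (hn : NOK G e₁ e₂ e α) (h1 : (C1set e.2 α).Nonempty) (h3 : (C3set G e.1 α).Nonempty) :
    NOK G e₁ e₂ (insert ((C3set G e.1 α).min' h3) e.1, {(C1set e.2 α).max' h1})
      (α + Finsupp.single t0 1 - Finsupp.single ((C1set e.2 α).max' h1) 1
        - Finsupp.single ((C3set G e.1 α).min' h3) 1) := by
  have hm1A2 := m1_mem_A2 horder hn h1
  have hm3A1 := m3_mem_A1 hG horder hn h3
  set m1 := (C1set e.2 α).max' h1 with hm1def
  set m3 := (C3set G e.1 α).min' h3 with hm3def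
  have hm1C := Finset.max'_mem _ h1
  rw [mem_C1set] at hm1C
  obtain ⟨hαm1, hm1gt⟩ := hm1C
  have hm3C := Finset.min'_mem _ h3
  rw [mem_C3set] at hm3C
  obtain ⟨hαm3, hm3lt, -⟩ := hm3C
  obtain ⟨hσ, hτ, hsA, htA, hS, hR, hP1, hQ⟩ := hn
  obtain ⟨s0, hs0⟩ := hσ
  have ht0mem : t0 ∈ e.2 := by rw [he2]; exact Finset.mem_singleton_self _
  have ht0A2 : t0 ∈ A2 e₁ e₂ := htA ht0mem
  have hs0t0 : s0 < t0 := horder s0 hs0 t0 ht0mem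
  have ht0m1 : t0 < m1 := hm1gt t0 ht0mem
  have hm3s0 : m3 < s0 := hm3lt s0 hs0
  have hm3t0 : m3 < t0 := lt_trans hm3s0 hs0t0
  have hC1bound : ∀ i, α i ≠ 0 → t0 < i → i ≤ m1 := by
    intro i hi hti
    refine Finset.le_max' _ i (mem_C1set.mpr ⟨hi, ?_⟩)
    intro j hj
    rw [he2, Finset.mem_singleton] at hj
    rw [hj]; exact hti
  set γ := α + Finsupp.single t0 1 - Finsupp.single m1 1 - Finsupp.single m3 1 with hγdef
  have happ : ∀ i, γ i = α i + (if t0 = i then 1 else 0) - (if m1 = i then 1 else 0)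
      - (if m3 = i then 1 else 0) := by
    intro i
    rw [hγdef, Finsupp.tsub_apply, Finsupp.tsub_apply, Finsupp.add_apply,
      Finsupp.single_apply, Finsupp.single_apply, Finsupp.single_apply]
  have hγt0 : γ t0 ≠ 0 := by
    rw [happ t0, if_pos rfl, if_neg (ne_of_gt ht0m1), if_neg (ne_of_lt hm3t0)]
    omega
  have hγof : ∀ i, i ≠ t0 → i ≠ m1 → i ≠ m3 → γ i = α i := by
    intro i h1' h2' h3'
    rw [happ i, if_neg (fun hh => h1' hh.symm), if_neg (fun hh => h2' hh.symm),
      if_neg (fun hh => h3' hh.symm)]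
    omega
  have hγ0 : ∀ i, γ i ≠ 0 → i = t0 ∨ α i ≠ 0 := by
    intro i hi
    by_cases h' : i = t0
    · exact Or.inl h'
    refine Or.inr fun hc => hi ?_
    rw [happ i, hc, if_neg (fun hh => h' hh.symm)]
    split_ifs <;> omega
  refine ⟨Finset.insert_nonempty _ _, Finset.singleton_nonempty _,
    Finset.insert_subset hm3A1 hsA, Finset.singleton_subset_iff.mpr hm1A2, ?_, ?_, ?_, ?_⟩
  · intro i hi
    rcases hγ0 i hi with rfl | hαi
    · exact Or.inr ht0A2
    · exact hS i hαi
  · intro i hDD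
    rcases hR i hDD with h' | h' | h'
    · exact Or.inl (Finset.mem_insert_of_mem h')
    · rw [he2, Finset.mem_singleton] at h'
      exact Or.inr (Or.inr (by rw [h']; exact hγt0))
    · by_cases hi1 : i = m1
      · exact Or.inr (Or.inl (by rw [hi1]; exact Finset.mem_singleton_self _))
      by_cases hi3 : i = m3
      · exact Or.inl (by rw [hi3]; exact Finset.mem_insert_self _ _)
      by_cases hit : i = t0
      · exact Or.inr (Or.inr (by rw [hit]; exact hγt0))
      · exact Or.inr (Or.inr (by rw [hγof i hit hi1 hi3]; exact h'))
  · intro i hγi hiA1 hiA2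
    rcases hγ0 i hγi with rfl | hαi
    · exact absurd ht0A2 hiA2
    obtain ⟨j, hij, hj⟩ := hP1 i hαi hiA1 hiA2
    refine ⟨j, hij, ?_⟩
    rcases hj with hj | hj | ⟨hαj, hjA2⟩
    · exact Or.inl (Finset.mem_insert_of_mem hj)
    · rw [he2, Finset.mem_singleton] at hj
      exact Or.inr (Or.inr ⟨by rw [hj]; exact hγt0, by rw [hj]; exact ht0A2⟩)
    · by_cases hj1 : j = m1
      · exact Or.inr (Or.inl (by rw [hj1]; exact Finset.mem_singleton_self _))
      by_cases hj3 : j = m3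
      · exact Or.inl (by rw [hj3]; exact Finset.mem_insert_self _ _)
      by_cases hjt : j = t0
      · exact Or.inr (Or.inr ⟨by rw [hjt]; exact hγt0, hjA2⟩)
      · exact Or.inr (Or.inr ⟨by rw [hγof j hjt hj1 hj3]; exact hαj, hjA2⟩)
  · intro i hγi hiA2 hiA1
    rcases hγ0 i hγi with rfl | hαi
    · exact ⟨s0, hs0t0, Or.inl (Finset.mem_insert_of_mem hs0)⟩
    by_cases him1 : i = m1
    · refine ⟨s0, ?_, Or.inl (Finset.mem_insert_of_mem hs0)⟩
      rw [him1]; exact lt_trans hs0t0 ht0m1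
    obtain ⟨x, hxi, hx⟩ := hQ i hαi hiA2 hiA1
    rcases hx with hx | hx | ⟨hαx, hxA1, hadjx⟩
    · exact ⟨x, hxi, Or.inl (Finset.mem_insert_of_mem hx)⟩
    · rw [he2, Finset.mem_singleton] at hx
      subst hx
      exact ⟨s0, lt_trans hs0t0 hxi, Or.inl (Finset.mem_insert_of_mem hs0)⟩
    · by_cases hx1 : x = m1
      · exfalso
        have hm1i : m1 < i := by rw [← hx1]; exact hxi
        exact absurd hm1i (not_lt.mpr (hC1bound i hαi (lt_trans ht0m1 hm1i)))
      by_cases hx3 : x = m3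
      · exact ⟨x, hxi, Or.inl (by rw [hx3]; exact Finset.mem_insert_self _ _)⟩
      by_cases hxt : x = t0
      · exact ⟨x, hxi, Or.inr (Or.inr ⟨by rw [hxt]; exact hγt0, hxA1, hadjx⟩)⟩
      · exact ⟨x, hxi, Or.inr (Or.inr ⟨by rw [hγof x hxt hx1 hx3]; exact hαx, hxA1, hadjx⟩)⟩

lemma lemA {G : SimpleGraph (Fin n)}
    (hG : ∀ x i j : Fin n, x < i → i ≤ j → G.Adj x i → G.Adj x j)
    {e₁ e₂ e : Cell n} {α : Fin n →₀ ℕ} (hin : InOK G e₁ e₂ e α)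
    {e' : Cell n} {γ : Fin n →₀ ℕ}
    (h : MvPolynomial.coeff γ ((cMono G k e α) e') ≠ 0) :
    TermOK G e₁ e₂ e' γ := by
  classical
  rw [cMono] at h
  by_cases hb : IsBasisCell G e
  swap
  · rw [if_neg hb] at h; simp at h
  rw [if_pos hb] at h
  by_cases hτ : e.2.Nonempty
  swap
  · rw [dif_neg hτ] at h
    rcases hin with ⟨hs0, ht0, ⟨u, v, huv, hadj, huA, hvA, hα⟩, hDDα⟩ | hnok
    swap
    · exact absurd hnok.2.1 hτ
    obtain ⟨s, t, hst, hadjst, hαs, hαt, he', hγeq, hbase⟩ := cZero_coeff h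
    have hsupp : ∀ x : Fin n, α x ≠ 0 → x = u ∨ x = v := by
      intro x hx
      by_contra hc
      push_neg at hc
      apply hx
      rw [hα, Finsupp.add_apply, Finsupp.single_apply, Finsupp.single_apply,
        if_neg (fun hh => hc.1 hh.symm), if_neg (fun hh => hc.2 hh.symm)]
      rfl
    have hsu : s = u ∧ t = v := by
      rcases hsupp s hαs with h' | h' <;> rcases hsupp t hαt with h'' | h''
      · exact absurd hst (by rw [h', h'']; exact lt_irrefl _)
      · exact ⟨h', h''⟩
      · exfalso
        exact lt_asymm (show t < s by rw [h', h'']; exact huv) hst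
      · exact absurd hst (by rw [h', h'']; exact lt_irrefl _)
    subst he'
    have hγ0 : γ = 0 := by
      rw [hγeq, hα, hsu.1, hsu.2]
      ext x
      rw [Finsupp.coe_zero, Pi.zero_apply, Finsupp.tsub_apply, Finsupp.tsub_apply,
        Finsupp.add_apply]
      rcases eq_or_ne u x with h' | h' <;> rcases eq_or_ne v x with h'' | h''
      · rw [Finsupp.single_apply, Finsupp.single_apply, if_pos h', if_pos h'']; omega
      · rw [Finsupp.single_apply, Finsupp.single_apply, if_pos h', if_neg h'']; omega
      · rw [Finsupp.single_apply, Finsupp.single_apply, if_neg h', if_pos h'']; omega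
      · rw [Finsupp.single_apply, Finsupp.single_apply, if_neg h', if_neg h'']; omega
    refine Or.inr ⟨Finset.singleton_nonempty _, Finset.singleton_nonempty _, ?_, ?_, ?_, ?_, ?_, ?_⟩
    · rw [hsu.1]; exact Finset.singleton_subset_iff.mpr huA
    · rw [hsu.2]; exact Finset.singleton_subset_iff.mpr hvA
    · intro i hi; rw [hγ0] at hi; simp at hi
    · intro i hDD
      rcases hsupp i (hDDα i hDD) with h' | h'
      · exact Or.inl (by rw [h', hsu.1]; exact Finset.mem_singleton_self u)
      · exact Or.inr (Or.inl (by rw [h', hsu.2]; exact Finset.mem_singleton_self v))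
    · intro i hi; rw [hγ0] at hi; simp at hi
    · intro i hi; rw [hγ0] at hi; simp at hi
  · rw [dif_pos hτ] at h
    have hnok : NOK G e₁ e₂ e α := by
      rcases hin with ⟨hs0, ht0, -⟩ | hnok
      · rw [ht0] at hτ; exact absurd hτ Finset.not_nonempty_empty
      · exact hnok
    obtain ⟨-, -, hdisj, horder, hadjm⟩ := basis_nondeg hb hτ
    by_cases hcard : e.2.card = 1
    · rw [if_pos hcard] at h
      simp only [] at h
      obtain ⟨t0, he2⟩ := Finset.card_eq_one.mp hcard
      have hmaxt : e.2.max' hτ = t0 := by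
        have h' : e.2.max' hτ ∈ ({t0} : Finset (Fin n)) := by
          rw [← he2]; exact Finset.max'_mem e.2 hτ
        exact Finset.mem_singleton.mp h' 
      split at h
      · rename_i h1
        rw [Finsupp.add_apply, MvPolynomial.coeff_add] at h
        rcases add_ne_zero_cases h with hA | hB
        · obtain ⟨he', hγeq, -⟩ := coeff_monomial_smul_sym hA
          subst he' hγeq
          exact Or.inr (lemA_T1 horder hnok h1)
        · split at hB
          · rename_i h3
            have hB2 := coeff_negpow_smul hB
            obtain ⟨he', hγeq, -⟩ := coeff_monomial_smul_sym hB2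
            rw [hmaxt] at hγeq
            subst he' hγeq
            exact Or.inr (lemA_T2 hG he2 horder hnok h1 h3)
          · simp at hB
      · rename_i h1
        split at h
        · rename_i h2
          have hB2 := coeff_negpow_smul h
          obtain ⟨he', hγeq, -⟩ := coeff_monomial_smul_sym hB2
          subst he' hγeq
          exact Or.inr (lemA_T3 hG horder hnok h2)
        · simp at h
    · rw [if_neg hcard] at h
      split at h
      · rename_i h1
        obtain ⟨he', hγeq, -⟩ := coeff_monomial_smul_sym h
        subst he' hγeq
        exact Or.inr (lemA_T1 horder hnok h1)
      · simp at h

lemma chi_singleton (u : Fin n) : chi ({u} : Finset (Fin n)) = Finsupp.single u 1 :=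
  Finset.sum_singleton _ _

lemma DD_erase1 {e₁ e₂ : Cell n} {i : Fin n} (hi : i ∈ e₁.1) :
    DD e₁ e₂ = DD ((e₁.1.erase i, e₁.2) : Cell n) e₂ + Finsupp.single i 1 := by
  show _ = ((chi (e₁.1.erase i) + chi e₁.2) + chi e₂.1) + chi e₂.2 + _
  rw [DD, chi_erase hi]
  abel

lemma DD_erase2 {e₁ e₂ : Cell n} {i : Fin n} (hi : i ∈ e₁.2) :
    DD e₁ e₂ = DD ((e₁.1, e₁.2.erase i) : Cell n) e₂ + Finsupp.single i 1 := by
  show _ = ((chi e₁.1 + chi (e₁.2.erase i)) + chi e₂.1) + chi e₂.2 + _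
  rw [DD, chi_erase hi]
  abel

lemma DD_B3 {e₁ e₂ : Cell n} {u v : Fin n} (hs1 : e₁.1 = {u}) (ht1 : e₁.2 = {v}) :
    DD e₁ e₂ = DD (((∅, ∅) : Cell n)) e₂ + Finsupp.single u 1 + Finsupp.single v 1 := by
  show _ = ((chi ∅ + chi ∅) + chi e₂.1) + chi e₂.2 + _ + _
  rw [DD, hs1, ht1, chi_singleton, chi_singleton, chi_empty]
  abel

lemma lemB1 {G : SimpleGraph (Fin n)} {e₁ e₂ : Cell n}
    (hb1 : IsBasisCell G e₁) (ht1 : e₁.2.Nonempty)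
    {i : Fin n} (hi : i ∈ e₁.1) {e : Cell n} {β : Fin n →₀ ℕ}
    (h : TermOK G ((e₁.1.erase i, e₁.2) : Cell n) e₂ e β) :
    InOK G e₁ e₂ e (β + Finsupp.single i 1) := by
  obtain ⟨-, -, -, horder1, -⟩ := basis_nondeg hb1 ht1
  have hDD := DD_erase1 (e₂ := e₂) hi
  have hA1sub : A1 ((e₁.1.erase i, e₁.2) : Cell n) e₂ ⊆ A1 e₁ e₂ :=
    Finset.union_subset_union (Finset.erase_subset _ _) subset_rfl
  have hiA1 : i ∈ A1 e₁ e₂ := Finset.mem_union_left _ hi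
  have happ : ∀ j, (β + Finsupp.single i 1 : Fin n →₀ ℕ) j = β j + (if i = j then 1 else 0) := by
    intro j; rw [Finsupp.add_apply, Finsupp.single_apply]
  rcases h with ⟨h1, h2, h3, hDD0⟩ | hn
  · exfalso
    obtain ⟨x, hx⟩ := ht1
    have hx2 : DD ((e₁.1.erase i, e₁.2) : Cell n) e₂ x ≠ 0 := by
      rw [DD, Finsupp.add_apply, Finsupp.add_apply, Finsupp.add_apply]
      have hc : chi ((e₁.1.erase i, e₁.2) : Cell n).2 x = 1 := by
        rw [chi_apply, if_pos hx]
      omega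
    rw [hDD0] at hx2
    simp at hx2
  · obtain ⟨hσ, hτ, hsA, htA, hS, hR, hP1, hQ⟩ := hn
    refine Or.inr ⟨hσ, hτ, fun x hx => hA1sub (hsA hx), htA, ?_, ?_, ?_, ?_⟩
    · intro j hj
      by_cases hji : j = i
      · exact Or.inl (by rw [hji]; exact hiA1)
      · have hβj : β j ≠ 0 := by
          intro hc; apply hj; rw [happ j, hc, if_neg (fun hh => hji hh.symm)]
        rcases hS j hβj with h' | h'
        · exact Or.inl (hA1sub h')
        · exact Or.inr h'
    · intro j hDDj
      by_cases hji : j = i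
      · refine Or.inr (Or.inr ?_)
        rw [happ j, if_pos hji.symm]
        omega
      · have hd : DD ((e₁.1.erase i, e₁.2) : Cell n) e₂ j ≠ 0 := by
          intro hc
          apply hDDj
          rw [hDD, Finsupp.add_apply, hc, Finsupp.single_apply,
            if_neg (fun hh => hji hh.symm)]
          rfl
        rcases hR j hd with h' | h' | h'
        · exact Or.inl h'
        · exact Or.inr (Or.inl h')
        · refine Or.inr (Or.inr ?_)
          rw [happ j]; intro hc; apply h'; omega
    · intro j hj hjA1 hjA2
      by_cases hji : j = i
      · have hj0m : e₁.2.min' ht1 ∈ e₁.2 := Finset.min'_mem _ _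
        have hij0 : j < e₁.2.min' ht1 := by rw [hji]; exact horder1 i hi _ hj0m
        have hDDj0 : DD ((e₁.1.erase i, e₁.2) : Cell n) e₂ (e₁.2.min' ht1) ≠ 0 := by
          rw [DD, Finsupp.add_apply, Finsupp.add_apply, Finsupp.add_apply]
          have hc : chi ((e₁.1.erase i, e₁.2) : Cell n).2 (e₁.2.min' ht1) = 1 := by
            rw [chi_apply, if_pos hj0m]
          omega
        refine ⟨e₁.2.min' ht1, hij0, ?_⟩
        rcases hR _ hDDj0 with h' | h' | h'
        · exact Or.inl h'
        · exact Or.inr (Or.inl h')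
        · refine Or.inr (Or.inr ⟨?_, Finset.mem_union_left _ hj0m⟩)
          rw [happ _]; intro hc; apply h'; omega
      · have hβj : β j ≠ 0 := by
          intro hc; apply hj; rw [happ j, hc, if_neg (fun hh => hji hh.symm)]
        have hjA1' : j ∈ A1 ((e₁.1.erase i, e₁.2) : Cell n) e₂ := by
          rcases hS j hβj with h' | h'
          · exact h'
          · exact absurd h' hjA2
        obtain ⟨j', hjj', hj'⟩ := hP1 j hβj hjA1' hjA2
        refine ⟨j', hjj', ?_⟩
        rcases hj' with h' | h' | ⟨hβ', hA2'⟩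
        · exact Or.inl h'
        · exact Or.inr (Or.inl h')
        · refine Or.inr (Or.inr ⟨?_, hA2'⟩)
          rw [happ j']; intro hc; apply hβ'; omega
    · intro j hj hjA2 hjA1
      by_cases hji : j = i
      · exact absurd (by rw [hji]; exact hiA1) hjA1
      · have hβj : β j ≠ 0 := by
          intro hc; apply hj; rw [happ j, hc, if_neg (fun hh => hji hh.symm)]
        have hjA1' : j ∉ A1 ((e₁.1.erase i, e₁.2) : Cell n) e₂ := fun hc => hjA1 (hA1sub hc)
        obtain ⟨x, hxj, hx⟩ := hQ j hβj hjA2 hjA1'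
        refine ⟨x, hxj, ?_⟩
        rcases hx with h' | h' | ⟨hβ', hA1', hadj'⟩
        · exact Or.inl h'
        · exact Or.inr (Or.inl h')
        · refine Or.inr (Or.inr ⟨?_, hA1sub hA1', hadj'⟩)
          rw [happ x]; intro hc; apply hβ'; omega

lemma lemB2 {G : SimpleGraph (Fin n)}
    (hG : ∀ x i j : Fin n, x < i → i ≤ j → G.Adj x i → G.Adj x j)
    {e₁ e₂ : Cell n}
    (hb1 : IsBasisCell G e₁) (hs1 : e₁.1.Nonempty) (ht1 : e₁.2.Nonempty)
    {i : Fin n} (hi : i ∈ e₁.2) {e : Cell n} {β : Fin n →₀ ℕ}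
    (h : TermOK G ((e₁.1, e₁.2.erase i) : Cell n) e₂ e β) :
    InOK G e₁ e₂ e (β + Finsupp.single i 1) := by
  obtain ⟨-, -, hdisj1, horder1, hadj1⟩ := basis_nondeg hb1 ht1
  have hDD := DD_erase2 (e₂ := e₂) hi
  have hA2sub : A2 ((e₁.1, e₁.2.erase i) : Cell n) e₂ ⊆ A2 e₁ e₂ :=
    Finset.union_subset_union (Finset.erase_subset _ _) subset_rfl
  have hiA2 : i ∈ A2 e₁ e₂ := Finset.mem_union_left _ hi
  have happ : ∀ j, (β + Finsupp.single i 1 : Fin n →₀ ℕ) j = β j + (if i = j then 1 else 0) := by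
    intro j; rw [Finsupp.add_apply, Finsupp.single_apply]
  rcases h with ⟨h1, h2, h3, hDD0⟩ | hn
  · exfalso
    obtain ⟨x, hx⟩ := hs1
    have hx2 : DD ((e₁.1, e₁.2.erase i) : Cell n) e₂ x ≠ 0 := by
      rw [DD, Finsupp.add_apply, Finsupp.add_apply, Finsupp.add_apply]
      have hc : chi ((e₁.1, e₁.2.erase i) : Cell n).1 x = 1 := by
        rw [chi_apply, if_pos hx]
      omega
    rw [hDD0] at hx2
    simp at hx2
  · obtain ⟨hσ, hτ, hsA, htA, hS, hR, hP1, hQ⟩ := hn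
    refine Or.inr ⟨hσ, hτ, hsA, fun x hx => hA2sub (htA hx), ?_, ?_, ?_, ?_⟩
    · intro j hj
      by_cases hji : j = i
      · exact Or.inr (by rw [hji]; exact hiA2)
      · have hβj : β j ≠ 0 := by
          intro hc; apply hj; rw [happ j, hc, if_neg (fun hh => hji hh.symm)]
        rcases hS j hβj with h' | h'
        · exact Or.inl h'
        · exact Or.inr (hA2sub h')
    · intro j hDDj
      by_cases hji : j = i
      · refine Or.inr (Or.inr ?_)
        rw [happ j, if_pos hji.symm]
        omega
      · have hd : DD ((e₁.1, e₁.2.erase i) : Cell n) e₂ j ≠ 0 := by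
          intro hc
          apply hDDj
          rw [hDD, Finsupp.add_apply, hc, Finsupp.single_apply,
            if_neg (fun hh => hji hh.symm)]
          rfl
        rcases hR j hd with h' | h' | h'
        · exact Or.inl h'
        · exact Or.inr (Or.inl h')
        · refine Or.inr (Or.inr ?_)
          rw [happ j]; intro hc; apply h'; omega
    · intro j hj hjA1 hjA2
      by_cases hji : j = i
      · exact absurd (by rw [hji]; exact hiA2) hjA2
      · have hβj : β j ≠ 0 := by
          intro hc; apply hj; rw [happ j, hc, if_neg (fun hh => hji hh.symm)]
        have hjA2' : j ∉ A2 ((e₁.1, e₁.2.erase i) : Cell n) e₂ := fun hc => hjA2 (hA2sub hc)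
        obtain ⟨j', hjj', hj'⟩ := hP1 j hβj hjA1 hjA2'
        refine ⟨j', hjj', ?_⟩
        rcases hj' with h' | h' | ⟨hβ', hA2'⟩
        · exact Or.inl h'
        · exact Or.inr (Or.inl h')
        · refine Or.inr (Or.inr ⟨?_, hA2sub hA2'⟩)
          rw [happ j']; intro hc; apply hβ'; omega
    · intro j hj hjA2 hjA1
      by_cases hji : j = i
      · obtain ⟨x, hx1⟩ := hs1
        have hxi : x < j := by rw [hji]; exact horder1 x hx1 i hi
        have hjmm : e₁.2.min' ht1 ∈ e₁.2 := Finset.min'_mem _ _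
        have hadjx : G.Adj x (e₁.2.min' ht1) :=
          hadj1 x hx1 _ hjmm (fun j' hj' => Finset.min'_le _ _ hj')
        have hxjm : x < e₁.2.min' ht1 := horder1 x hx1 _ hjmm
        have hadjxi : G.Adj x j := by
          rw [hji]; exact hG x _ i hxjm (Finset.min'_le _ _ hi) hadjx
        have hDDx : DD ((e₁.1, e₁.2.erase i) : Cell n) e₂ x ≠ 0 := by
          rw [DD, Finsupp.add_apply, Finsupp.add_apply, Finsupp.add_apply]
          have hc : chi ((e₁.1, e₁.2.erase i) : Cell n).1 x = 1 := by
            rw [chi_apply, if_pos hx1]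
          omega
        refine ⟨x, hxi, ?_⟩
        rcases hR x hDDx with h' | h' | h'
        · exact Or.inl h'
        · exact Or.inr (Or.inl h')
        · refine Or.inr (Or.inr ⟨?_, Finset.mem_union_left _ hx1, hadjxi⟩)
          rw [happ x]; intro hc; apply h'; omega
      · have hβj : β j ≠ 0 := by
          intro hc; apply hj; rw [happ j, hc, if_neg (fun hh => hji hh.symm)]
        have hjA2'' : j ∈ A2 ((e₁.1, e₁.2.erase i) : Cell n) e₂ := by
          rcases hS j hβj with h' | h'
          · exact absurd h' hjA1
          · exact h'
        obtain ⟨x, hxj, hx⟩ := hQ j hβj hjA2'' hjA1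
        refine ⟨x, hxj, ?_⟩
        rcases hx with h' | h' | ⟨hβ', hA1', hadj'⟩
        · exact Or.inl h'
        · exact Or.inr (Or.inl h')
        · refine Or.inr (Or.inr ⟨?_, hA1', hadj'⟩)
          rw [happ x]; intro hc; apply hβ'; omega

lemma lemB3 {G : SimpleGraph (Fin n)} {e₁ e₂ : Cell n} {u v : Fin n}
    (hs1 : e₁.1 = {u}) (ht1 : e₁.2 = {v}) (huv : u < v) (hadj : G.Adj u v)
    {e : Cell n} {β : Fin n →₀ ℕ}
    (h : TermOK G (((∅, ∅) : Cell n)) e₂ e β) :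
    InOK G e₁ e₂ e (β + Finsupp.single u 1 + Finsupp.single v 1) := by
  have huA1 : u ∈ A1 e₁ e₂ := Finset.mem_union_left _ (by rw [hs1]; exact Finset.mem_singleton_self _)
  have hvA2 : v ∈ A2 e₁ e₂ := Finset.mem_union_left _ (by rw [ht1]; exact Finset.mem_singleton_self _)
  have hDD := DD_B3 (e₂ := e₂) hs1 ht1
  have hA1sub : A1 (((∅, ∅) : Cell n)) e₂ ⊆ A1 e₁ e₂ :=
    Finset.union_subset_union (Finset.empty_subset _) subset_rfl
  have hA2sub : A2 (((∅, ∅) : Cell n)) e₂ ⊆ A2 e₁ e₂ :=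
    Finset.union_subset_union (Finset.empty_subset _) subset_rfl
  have hune : u ≠ v := ne_of_lt huv
  have happ : ∀ j, (β + Finsupp.single u 1 + Finsupp.single v 1 : Fin n →₀ ℕ) j
      = β j + (if u = j then 1 else 0) + (if v = j then 1 else 0) := by
    intro j
    rw [Finsupp.add_apply, Finsupp.add_apply, Finsupp.single_apply, Finsupp.single_apply]
  have hβof : ∀ j, j ≠ u → j ≠ v →
      (β + Finsupp.single u 1 + Finsupp.single v 1 : Fin n →₀ ℕ) j ≠ 0 → β j ≠ 0 := by
    intro j h1 h2 h3 hc
    apply h3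
    rw [happ j, hc, if_neg (fun hh => h1 hh.symm), if_neg (fun hh => h2 hh.symm)]
  rcases h with ⟨h1, h2, hβ0, hDD0⟩ | hn
  · refine Or.inl ⟨h1, h2, ⟨u, v, huv, hadj, huA1, hvA2, ?_⟩, ?_⟩
    · rw [hβ0, zero_add]
    · intro j hDDj
      rw [happ j]
      have hz : DD (((∅, ∅) : Cell n)) e₂ j = 0 := by rw [hDD0]; rfl
      rw [hDD, Finsupp.add_apply, Finsupp.add_apply, hz, Finsupp.single_apply,
        Finsupp.single_apply] at hDDj
      intro hc; apply hDDj; omega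
  · obtain ⟨hσ, hτ, hsA, htA, hS, hR, hP1, hQ⟩ := hn
    refine Or.inr ⟨hσ, hτ, fun x hx => hA1sub (hsA hx), fun x hx => hA2sub (htA hx),
      ?_, ?_, ?_, ?_⟩
    · intro j hj
      by_cases hju : j = u
      · exact Or.inl (by rw [hju]; exact huA1)
      by_cases hjv : j = v
      · exact Or.inr (by rw [hjv]; exact hvA2)
      rcases hS j (hβof j hju hjv hj) with h' | h'
      · exact Or.inl (hA1sub h')
      · exact Or.inr (hA2sub h')
    · intro j hDDj
      by_cases hju : j = u
      · refine Or.inr (Or.inr ?_)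
        rw [happ j, if_pos hju.symm]
        omega
      by_cases hjv : j = v
      · refine Or.inr (Or.inr ?_)
        rw [happ j, if_pos hjv.symm]
        omega
      have hd : DD (((∅, ∅) : Cell n)) e₂ j ≠ 0 := by
        intro hc
        apply hDDj
        rw [hDD, Finsupp.add_apply, Finsupp.add_apply, hc, Finsupp.single_apply,
          Finsupp.single_apply, if_neg (fun hh => hju hh.symm), if_neg (fun hh => hjv hh.symm)]
        rfl
      rcases hR j hd with h' | h' | h'
      · exact Or.inl h'
      · exact Or.inr (Or.inl h')
      · refine Or.inr (Or.inr ?_)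
        rw [happ j]; intro hc; apply h'; omega
    · intro j hj hjA1 hjA2
      by_cases hju : j = u
      · refine ⟨v, by rw [hju]; exact huv, Or.inr (Or.inr ⟨?_, hvA2⟩)⟩
        rw [happ v, if_neg hune, if_pos rfl]
        omega
      by_cases hjv : j = v
      · exact absurd (by rw [hjv]; exact hvA2) hjA2
      have hβj := hβof j hju hjv hj
      have hjA1' : j ∈ A1 (((∅, ∅) : Cell n)) e₂ := by
        rcases hS j hβj with h' | h'
        · exact h'
        · exact absurd (hA2sub h') hjA2
      have hjA2' : j ∉ A2 (((∅, ∅) : Cell n)) e₂ := fun hc => hjA2 (hA2sub hc)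
      obtain ⟨j', hjj', hj'⟩ := hP1 j hβj hjA1' hjA2'
      refine ⟨j', hjj', ?_⟩
      rcases hj' with h' | h' | ⟨hβ', hA2'⟩
      · exact Or.inl h'
      · exact Or.inr (Or.inl h')
      · refine Or.inr (Or.inr ⟨?_, hA2sub hA2'⟩)
        rw [happ j']; intro hc; apply hβ'; omega
    · intro j hj hjA2 hjA1
      by_cases hju : j = u
      · exact absurd (by rw [hju]; exact huA1) hjA1
      by_cases hjv : j = v
      · refine ⟨u, by rw [hjv]; exact huv,
          Or.inr (Or.inr ⟨?_, huA1, by rw [hjv]; exact hadj⟩)⟩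
        rw [happ u, if_pos rfl, if_neg (fun hh => hune hh.symm)]
        omega
      have hβj := hβof j hju hjv hj
      have hjA2'' : j ∈ A2 (((∅, ∅) : Cell n)) e₂ := by
        rcases hS j hβj with h' | h'
        · exact absurd (hA1sub h') hjA1
        · exact h'
      have hjA1'' : j ∉ A1 (((∅, ∅) : Cell n)) e₂ := fun hc => hjA1 (hA1sub hc)
      obtain ⟨x, hxj, hx⟩ := hQ j hβj hjA2'' hjA1''
      refine ⟨x, hxj, ?_⟩
      rcases hx with h' | h' | ⟨hβ', hA1', hadj'⟩
      · exact Or.inl h'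
      · exact Or.inr (Or.inl h')
      · refine Or.inr (Or.inr ⟨?_, hA1sub hA1', hadj'⟩)
        rw [happ x]; intro hc; apply hβ'; omega

lemma coeff_mono_mul_sym {G : SimpleGraph (Fin n)} {δ : Fin n →₀ ℕ} {e e' : Cell n}
    {γ : Fin n →₀ ℕ}
    (h : MvPolynomial.coeff γ ((MvPolynomial.monomial δ (1:k)) * (sym G k e) e') ≠ 0) :
    e' = e ∧ γ = δ ∧ IsBasisCell G e := by
  classical
  obtain ⟨a, b, hab, ha, hb⟩ := coeff_elem_mul h
  obtain ⟨he, hb0, hbase⟩ := coeff_sym hb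
  rw [MvPolynomial.coeff_monomial] at ha
  have : δ = a := by by_contra hh; rw [if_neg hh] at ha; exact ha rfl
  subst this hb0
  exact ⟨he, by rw [← hab, add_zero], hbase⟩

lemma coeff_negpow_mul {m : ℕ} {p : MvPolynomial (Fin n) k} {γ : Fin n →₀ ℕ}
    (h : MvPolynomial.coeff γ (((-1 : MvPolynomial (Fin n) k) ^ m) * p) ≠ 0) :
    MvPolynomial.coeff γ p ≠ 0 := by
  intro hh
  apply h
  have he : ((-1 : MvPolynomial (Fin n) k) ^ m) = MvPolynomial.C ((-1 : k) ^ m) := by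
    rw [map_pow, map_neg, map_one]
  rw [he, MvPolynomial.coeff_C_mul, hh, mul_zero]

lemma Dmap_single {G : SimpleGraph (Fin n)} (e : Cell n) :
    Dmap G k (Finsupp.single e 1) = diffCell G k e := by
  rw [Dmap, Finsupp.lsum_single, LinearMap.smulRight_apply, LinearMap.id_apply, one_smul]

lemma diff_supp {G : SimpleGraph (Fin n)} {e₁ : Cell n} (hb : IsBasisCell G e₁)
    {e' : Cell n} {γ1 : Fin n →₀ ℕ}
    (h : MvPolynomial.coeff γ1 ((diffCell G k e₁) e') ≠ 0) :
    (∃ i ∈ e₁.1, IsBasisCell G ((e₁.1.erase i, e₁.2) : Cell n) ∧ e' = (e₁.1.erase i, e₁.2) ∧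
        γ1 = Finsupp.single i 1 ∧ 3 ≤ e₁.1.card + e₁.2.card) ∨
    (∃ i ∈ e₁.2, IsBasisCell G ((e₁.1, e₁.2.erase i) : Cell n) ∧ e' = (e₁.1, e₁.2.erase i) ∧
        γ1 = Finsupp.single i 1 ∧ 3 ≤ e₁.1.card + e₁.2.card) ∨
    (∃ u v : Fin n, u < v ∧ G.Adj u v ∧ e₁.1 = {u} ∧ e₁.2 = {v} ∧ e' = ((∅, ∅) : Cell n) ∧
        γ1 = Finsupp.single u 1 + Finsupp.single v 1) := by
  classical
  rw [diffCell, if_pos hb] at h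
  split at h
  · rename_i hc2
    refine Or.inr (Or.inr ?_)
    have ht : e₁.2.Nonempty := basis_card_nondeg hb (by omega)
    obtain ⟨hs, -, hdisj, horder, hadjm⟩ := basis_nondeg hb ht
    have hcs : e₁.1.card = 1 := by
      have h1 := Finset.card_pos.mpr hs
      have h2 := Finset.card_pos.mpr ht
      omega
    have hct : e₁.2.card = 1 := by
      have h1 := Finset.card_pos.mpr hs
      have h2 := Finset.card_pos.mpr ht
      omega
    obtain ⟨u, hu⟩ := Finset.card_eq_one.mp hcs
    obtain ⟨v, hv⟩ := Finset.card_eq_one.mp hct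
    have humem : u ∈ e₁.1 := by rw [hu]; exact Finset.mem_singleton_self _
    have hvmem : v ∈ e₁.2 := by rw [hv]; exact Finset.mem_singleton_self _
    have huv : u < v := horder u humem v hvmem
    have hadj : G.Adj u v := hadjm u humem v hvmem (fun j' hj' => by
      rw [hv, Finset.mem_singleton] at hj'
      rw [hj'])
    have hXu : (X u : MvPolynomial (Fin n) k) = MvPolynomial.monomial (Finsupp.single u 1) 1 := by
      rw [← MvPolynomial.X_pow_eq_monomial, pow_one]
    have hXv : (X v : MvPolynomial (Fin n) k) = MvPolynomial.monomial (Finsupp.single v 1) 1 := by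
      rw [← MvPolynomial.X_pow_eq_monomial, pow_one]
    have hprod : (∏ i ∈ e₁.1 ∪ e₁.2, (X i : MvPolynomial (Fin n) k))
        = MvPolynomial.monomial (Finsupp.single u 1 + Finsupp.single v 1) 1 := by
      rw [hu, hv, ← Finset.insert_eq,
        Finset.prod_insert (by rw [Finset.mem_singleton]; exact ne_of_lt huv),
        Finset.prod_singleton, hXu, hXv, MvPolynomial.monomial_mul, mul_one]
    rw [hprod] at h
    obtain ⟨he', hγ, -⟩ := coeff_monomial_smul_sym h
    exact ⟨u, v, huv, hadj, hu, hv, he', hγ⟩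
  · split at h
    · rename_i h3
      rw [Finsupp.add_apply, MvPolynomial.coeff_add] at h
      rcases add_ne_zero_cases h with hA | hB
      · rw [Finsupp.finset_sum_apply, MvPolynomial.coeff_sum] at hA
        obtain ⟨i, hi, hne⟩ := Finset.exists_ne_zero_of_sum_ne_zero hA
        rw [Finsupp.smul_apply, smul_eq_mul, mul_assoc] at hne
        have hne2 := coeff_negpow_mul hne
        have hXi : (X i : MvPolynomial (Fin n) k)
            = MvPolynomial.monomial (Finsupp.single i 1) 1 := by
          rw [← MvPolynomial.X_pow_eq_monomial, pow_one]
        rw [hXi] at hne2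
        obtain ⟨he', hγ, hbE⟩ := coeff_mono_mul_sym hne2
        exact Or.inl ⟨i, hi, hbE, he', hγ, h3⟩
      · rw [Finsupp.finset_sum_apply, MvPolynomial.coeff_sum] at hB
        obtain ⟨i, hi, hne⟩ := Finset.exists_ne_zero_of_sum_ne_zero hB
        rw [Finsupp.smul_apply, smul_eq_mul, mul_assoc] at hne
        have hne2 := coeff_negpow_mul hne
        have hXi : (X i : MvPolynomial (Fin n) k)
            = MvPolynomial.monomial (Finsupp.single i 1) 1 := by
          rw [← MvPolynomial.X_pow_eq_monomial, pow_one]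
        rw [hXi] at hne2
        obtain ⟨he', hγ, hbE⟩ := coeff_mono_mul_sym hne2
        exact Or.inr (Or.inl ⟨i, hi, hbE, he', hγ, h3⟩)
    · simp at h

lemma cmap_ok {G : SimpleGraph (Fin n)}
    (hG : ∀ x i j : Fin n, x < i → i ≤ j → G.Adj x i → G.Adj x j)
    {e₁ e₂ : Cell n} {f : Ftot n k}
    (hf : ∀ (p : Cell n) (α : Fin n →₀ ℕ), MvPolynomial.coeff α (f p) ≠ 0 → InOK G e₁ e₂ p α)
    {e' : Cell n} {γ : Fin n →₀ ℕ}
    (hc : MvPolynomial.coeff γ ((Cmap G k f) e') ≠ 0) : TermOK G e₁ e₂ e' γ := by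
  classical
  rw [Cmap, Module.Basis.constr_apply, Finsupp.sum, Finsupp.finset_sum_apply,
    MvPolynomial.coeff_sum] at hc
  obtain ⟨p, hp, hne⟩ := Finset.exists_ne_zero_of_sum_ne_zero hc
  have h2 := coeff_ksmul hne
  refine lemA hG (hf p.1 p.2 ?_) h2
  have hmem := Finsupp.mem_support_iff.mp hp
  rw [FBasis, Finsupp.basis_repr] at hmem
  exact hmem

lemma bstar_ok {G : SimpleGraph (Fin n)}
    (hG : ∀ x i j : Fin n, x < i → i ≤ j → G.Adj x i → G.Adj x j) :
    ∀ (N : ℕ) (e₁ e₂ : Cell n), IsBasisCell G e₁ → IsBasisCell G e₂ →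
    ∀ (e : Cell n) (α : Fin n →₀ ℕ),
      MvPolynomial.coeff α ((bstar G k N e₁ e₂) e) ≠ 0 → TermOK G e₁ e₂ e α := by
  intro N
  induction N with
  | zero =>
    intro e₁ e₂ _ _ e α h
    rw [bstar] at h
    simp at h
  | succ N ih =>
    intro e₁ e₂ hb1 hb2 e α h
    rw [bstar] at h
    split at h
    · rename_i hdeg
      rw [Finsupp.single_apply] at h
      have he : ((∅, ∅) : Cell n) = e := by
        by_contra hc
        rw [if_neg hc] at h
        simp at h
      rw [if_pos he] at h
      have hα0 : α = 0 := by
        rw [MvPolynomial.coeff_one] at h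
        split at h
        · rename_i hh
          first | exact hh | exact hh.symm
        · simp at h
      have he1 : e₁ = ((∅, ∅) : Cell n) := cellDeg_zero_eq hb1 (by omega)
      have he2 : e₂ = ((∅, ∅) : Cell n) := cellDeg_zero_eq hb2 (by omega)
      refine Or.inl ⟨by rw [← he], by rw [← he], hα0, ?_⟩
      rw [he1, he2, DD]
      show ((chi ∅ + chi ∅) + chi ∅) + chi ∅ = 0
      rw [chi_empty]
      simp
    · rename_i hdeg
      rw [Finsupp.add_apply, MvPolynomial.coeff_add] at h
      rcases add_ne_zero_cases h with hL | hR2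
      · refine cmap_ok hG ?_ hL
        intro p α' hp
        have hrw : biext k (fun a b => bstar G k N a b) (Dmap G k (Finsupp.single e₁ 1))
            (Finsupp.single e₂ 1)
            = ∑ ea ∈ (diffCell G k e₁).support,
                ((diffCell G k e₁) ea) • bstar G k N ea e₂ := by
          rw [biext, Dmap_single, Finsupp.support_single_ne_zero e₂ one_ne_zero]
          refine Finset.sum_congr rfl fun ea _ => ?_
          rw [Finset.sum_singleton, Finsupp.single_eq_same, mul_one]
        rw [hrw, Finsupp.finset_sum_apply, MvPolynomial.coeff_sum] at hp
        obtain ⟨ea, hea, hne⟩ := Finset.exists_ne_zero_of_sum_ne_zero hp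
        rw [Finsupp.smul_apply, smul_eq_mul] at hne
        obtain ⟨γ1, γ2, hsum, hc1, hc2⟩ := coeff_elem_mul hne
        rcases diff_supp hb1 hc1 with ⟨i, hi, hbE, heE, hγ1, hcard3⟩ |
          ⟨i, hi, hbE, heE, hγ1, hcard3⟩ | ⟨u, v, huv, hadj, hu, hv, heE, hγ1⟩
        · subst heE
          have hT := ih _ e₂ hbE hb2 p γ2 hc2
          have hα' : α' = γ2 + Finsupp.single i 1 := by rw [← hsum, hγ1]; abel
          rw [hα']
          exact lemB1 hb1 (basis_card_nondeg hb1 (by omega)) hi hT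
        · subst heE
          have hT := ih _ e₂ hbE hb2 p γ2 hc2
          have hα' : α' = γ2 + Finsupp.single i 1 := by rw [← hsum, hγ1]; abel
          rw [hα']
          have ht1 : e₁.2.Nonempty := basis_card_nondeg hb1 (by omega)
          exact lemB2 hG hb1 (basis_nondeg hb1 ht1).1 ht1 hi hT
        · subst heE
          have hT := ih _ e₂ (Or.inl rfl) hb2 p γ2 hc2
          have hα' : α' = γ2 + Finsupp.single u 1 + Finsupp.single v 1 := by
            rw [← hsum, hγ1]; abel
          rw [hα']
          exact lemB3 hu hv huv hadj hT
      · have hR3 := coeff_negpow_smul hR2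
        refine cmap_ok hG ?_ hR3
        intro p α' hp
        have hrw : biext k (fun a b => bstar G k N a b) (Finsupp.single e₁ 1)
            (Dmap G k (Finsupp.single e₂ 1))
            = ∑ eb ∈ (diffCell G k e₂).support,
                ((diffCell G k e₂) eb) • bstar G k N e₁ eb := by
          rw [biext, Dmap_single, Finsupp.support_single_ne_zero e₁ one_ne_zero,
            Finset.sum_singleton, Finsupp.single_eq_same]
          refine Finset.sum_congr rfl fun eb _ => ?_
          rw [one_mul]
        rw [hrw, Finsupp.finset_sum_apply, MvPolynomial.coeff_sum] at hp
        obtain ⟨eb, heb, hne⟩ := Finset.exists_ne_zero_of_sum_ne_zero hp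
        rw [Finsupp.smul_apply, smul_eq_mul] at hne
        obtain ⟨γ1, γ2, hsum, hc1, hc2⟩ := coeff_elem_mul hne
        rcases diff_supp hb2 hc1 with ⟨i, hi, hbE, heE, hγ1, hcard3⟩ |
          ⟨i, hi, hbE, heE, hγ1, hcard3⟩ | ⟨u, v, huv, hadj, hu, hv, heE, hγ1⟩
        · subst heE
          have hT := TermOK_comm (ih e₁ _ hb1 hbE p γ2 hc2)
          have hα' : α' = γ2 + Finsupp.single i 1 := by rw [← hsum, hγ1]; abel
          rw [hα']
          exact InOK_comm (lemB1 hb2 (basis_card_nondeg hb2 (by omega)) hi hT)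
        · subst heE
          have hT := TermOK_comm (ih e₁ _ hb1 hbE p γ2 hc2)
          have hα' : α' = γ2 + Finsupp.single i 1 := by rw [← hsum, hγ1]; abel
          rw [hα']
          have ht1 : e₂.2.Nonempty := basis_card_nondeg hb2 (by omega)
          exact InOK_comm (lemB2 hG hb2 (basis_nondeg hb2 ht1).1 ht1 hi hT)
        · subst heE
          have hT := TermOK_comm (ih e₁ _ hb1 (Or.inl rfl) p γ2 hc2)
          have hα' : α' = γ2 + Finsupp.single u 1 + Finsupp.single v 1 := by
            rw [← hsum, hγ1]; abel
          rw [hα']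
          exact InOK_comm (lemB3 hu hv huv hadj hT)

end Aux

theorem stmt12 (n : ℕ) (hn : 1 ≤ n) (a b : Fin n → ℝ)
    (hab : ∀ i, a i ≤ b i) (hmono : ∀ i j : Fin n, i < j → a i ≤ a j)
    (k : Type) [Field k]
    (p q : ℕ) (hp : 1 ≤ p) (hq : 1 ≤ q) (e₁ e₂ : Cell n)
    (h1 : InB (cigraph n a b) p e₁) (h2 : InB (cigraph n a b) q e₂)
    (e₃ : Cell n) (h3 : IsBasisCell (cigraph n a b) e₃)
    (hne : pstar (cigraph n a b) k (Finsupp.single e₁ 1) (Finsupp.single e₂ 1) e₃ ≠ 0) :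
    e₃.1 ⊆ e₁.1 ∪ e₂.1 ∧ e₃.2 ⊆ e₁.2 ∪ e₂.2 := by
  classical
  have hb1 := h1.1
  have hb2 := h2.1
  rw [pstar, biext, Finsupp.support_single_ne_zero e₁ one_ne_zero,
    Finsupp.support_single_ne_zero e₂ one_ne_zero, Finset.sum_singleton,
    Finset.sum_singleton, Finsupp.single_eq_same, Finsupp.single_eq_same, one_mul,
    one_smul] at hne
  obtain ⟨α, hα⟩ := MvPolynomial.ne_zero_iff.mp hne
  have hT := bstar_ok (adj_upward hab hmono) (4 * n + 4) e₁ e₂ hb1 hb2 e₃ α hα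
  rcases hT with ⟨hs, ht, -, -⟩ | hnok
  · exact ⟨by rw [hs]; exact Finset.empty_subset _, by rw [ht]; exact Finset.empty_subset _⟩
  · exact ⟨hnok.2.2.1, hnok.2.2.2.1⟩

end EdgeRes
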